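/- Let σ be a generator of Gal(𝔽_{q^m}/𝔽_q), let n ≤ m, let β_1,…,β_n ∈ 𝔽_{q^m} be linearly independent over 𝔽_q with S = ⟨β_1,…,β_n⟩_{𝔽_q}, let a_1,…,a_t ∈ 𝔽_{q^m}^* have pairwise distinct norms N_{q^m/q}(a_i), let 2 ≤ k ≤ nt, and let γ, δ ∈ 𝔽_{q^m}^*. For i ∈ {1,…,t} set U_i = { (y, σ(y)·N_1(a_i), …, σ^{k−1}(y)·N_{k−1}(a_i)) : y ∈ S } ⊆ 𝔽_{q^m}^k, and set U_0 = 𝔽_q·(γ,0,…,0) and U_∞ = 𝔽_q·(0,…,0,δ). Then Σ_{i=1}^t dim_{𝔽_q}(U_i ∩ H) + dim_{𝔽_q}(U_0 ∩ H) + dim_{𝔽_q}(U_∞ ∩ H) ≤ k − 1 for every 𝔽_{q^m}-hyperplane H of 𝔽_{q^m}^k; equivalently, the doubly-extended linearized Reed-Solomon code of dimension k associated with these data is a maximum sum-rank distance code (of length nt+2 and minimum distance nt+3−k). -/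

import Mathlib

/-- The dot-product functional `w ↦ ∑ j, v j * w j`. -/
noncomputable def dotL (Fqm : Type) [Field Fqm] {k : ℕ} (v : Fin k → Fqm) :
    (Fin k → Fqm) →ₗ[Fqm] Fqm where
  toFun w := ∑ j, v j * w j
  map_add' x y := by simp [mul_add, Finset.sum_add_distrib]
  map_smul' c x := by
    simp only [Pi.smul_apply, smul_eq_mul, RingHom.id_apply, Finset.mul_sum]
    exact Finset.sum_congr rfl fun j _ => by ring

/-- `v^⊥ = {w : Fqm^k | ∑ j, v j * w j = 0}` regarded as an `Fq`-subspace of `Fqm^k`. -/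
noncomputable def perpQ (Fq Fqm : Type) [Field Fq] [Field Fqm] [Algebra Fq Fqm]
    {k : ℕ} (v : Fin k → Fqm) : Submodule Fq (Fin k → Fqm) :=
  Submodule.restrictScalars Fq (LinearMap.ker (dotL Fqm v))

/-- The `Fq`-linear map `y ↦ (y, σ(y)·N₁(a), σ²(y)·N₂(a), …, σ^{k-1}(y)·N_{k-1}(a))`,
where `N_j(a) = ∏_{l<j} σ^l(a)`. -/
noncomputable def lrsMap (Fq Fqm : Type) [Field Fq] [Field Fqm] [Algebra Fq Fqm]
    (σ : Fqm ≃ₐ[Fq] Fqm) (k : ℕ) (a : Fqm) : Fqm →ₗ[Fq] (Fin k → Fqm) where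
  toFun y := fun j => (σ ^ (j : ℕ)) y * ∏ l ∈ Finset.range (j : ℕ), (σ ^ l) a
  map_add' x y := by funext j; simp [map_add, add_mul]
  map_smul' c x := by funext j; simp [_root_.map_smul, smul_mul_assoc]


open Finset LinearMap Module

section Aux
variable (Fq Fqm : Type) [Field Fq] [Field Fqm] [Algebra Fq Fqm]

/-- The `Fq`-linear map `y ↦ σ(y) * b`. -/
noncomputable def Dop (σ : Fqm ≃ₐ[Fq] Fqm) (b : Fqm) : Fqm →ₗ[Fq] Fqm :=
  (LinearMap.mulRight Fq b) ∘ₗ σ.toLinearMap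

@[simp] lemma Dop_apply (σ : Fqm ≃ₐ[Fq] Fqm) (b y : Fqm) :
    Dop Fq Fqm σ b y = σ y * b := rfl

lemma Dop_pow_apply (σ : Fqm ≃ₐ[Fq] Fqm) (b : Fqm) (j : ℕ) (y : Fqm) :
    ((Dop Fq Fqm σ b) ^ j) y = (σ ^ j) y * ∏ l ∈ Finset.range j, (σ ^ l) b := by
  induction j with
  | zero => simp
  | succ j ih =>
    rw [pow_succ', Module.End.mul_apply, ih, Finset.prod_range_succ']
    have h1 : σ ((σ ^ j) y) = (σ ^ (j+1)) y := by rw [pow_succ']; rfl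
    have h2 : ∀ l, σ ((σ ^ l) b) = (σ ^ (l+1)) b := fun l => by rw [pow_succ']; rfl
    rw [Dop_apply, map_mul, h1, map_prod]
    simp only [h2, pow_zero, AlgEquiv.one_apply]
    ring

/-- The operator `y ↦ ∑_{j ≤ d} f j · σ^j(y) · N_j(b)`. -/
noncomputable def op (σ : Fqm ≃ₐ[Fq] Fqm) (f : ℕ → Fqm) (d : ℕ) (b : Fqm) :
    Fqm →ₗ[Fq] Fqm :=
  ∑ j ∈ Finset.range (d+1), (LinearMap.mulLeft Fq (f j)) ∘ₗ ((Dop Fq Fqm σ b) ^ j)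

lemma op_apply (σ : Fqm ≃ₐ[Fq] Fqm) (f : ℕ → Fqm) (d : ℕ) (b y : Fqm) :
    op Fq Fqm σ f d b y
      = ∑ j ∈ Finset.range (d+1), f j * ((σ ^ j) y * ∏ l ∈ Finset.range j, (σ ^ l) b) := by
  simp only [op, LinearMap.sum_apply, LinearMap.comp_apply, LinearMap.mulLeft_apply,
    Dop_pow_apply]

/-- rank-nullity style bound for kernels of compositions. -/
lemma finrank_ker_comp_le {K V : Type*} [Field K] [AddCommGroup V] [Module K V]
    [FiniteDimensional K V] (A B : V →ₗ[K] V) :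
    finrank K (LinearMap.ker (A ∘ₗ B)) ≤
      finrank K (LinearMap.ker A) + finrank K (LinearMap.ker B) := by
  have hmem : ∀ x : LinearMap.ker (A ∘ₗ B), B x.1 ∈ LinearMap.ker A := by
    rintro ⟨x, hx⟩
    simpa [LinearMap.mem_ker, LinearMap.comp_apply] using hx
  let B' : LinearMap.ker (A ∘ₗ B) →ₗ[K] LinearMap.ker A :=
    (B.domRestrict (LinearMap.ker (A ∘ₗ B))).codRestrict (LinearMap.ker A) hmem
  have h1 := LinearMap.finrank_range_add_finrank_ker B'
  have h2 : finrank K (LinearMap.range B') ≤ finrank K (LinearMap.ker A) :=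
    Submodule.finrank_le _
  have h3 : finrank K (LinearMap.ker B') ≤ finrank K (LinearMap.ker B) := by
    have hmem2 : ∀ x : LinearMap.ker B', x.1.1 ∈ LinearMap.ker B := by
      rintro ⟨⟨x, hx⟩, hx2⟩
      have := congrArg Subtype.val hx2
      rw [LinearMap.mem_ker]; exact this
    refine LinearMap.finrank_le_finrank_of_injective
      (f := ((LinearMap.ker (A ∘ₗ B)).subtype.comp (LinearMap.ker B').subtype).codRestrict
        (LinearMap.ker B) hmem2) ?_
    intro x y hxy
    have := congrArg Subtype.val hxy
    exact Subtype.ext (Subtype.ext this)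
  omega
end Aux
open Finset LinearMap Module

section Aux2
variable (Fq Fqm : Type) [Field Fq] [Field Fqm] [Algebra Fq Fqm]

lemma Nm_sigma (σ : Fqm ≃ₐ[Fq] Fqm) (m : ℕ) (hσm : σ ^ m = 1) (z : Fqm) :
    (∏ l ∈ Finset.range m, (σ ^ l) (σ z)) = ∏ l ∈ Finset.range m, (σ ^ l) z := by
  have h1 : ∀ l, (σ ^ l) (σ z) = (σ ^ (l+1)) z := fun l => by
    rw [pow_succ]; rfl
  by_cases hz : z = 0
  · subst hz; simp
  · apply mul_right_cancel₀ hz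
    calc (∏ l ∈ Finset.range m, (σ ^ l) (σ z)) * z
        = (∏ l ∈ Finset.range m, (σ ^ (l+1)) z) * (σ ^ 0) z := by
          simp only [h1, pow_zero, AlgEquiv.one_apply]
      _ = ∏ l ∈ Finset.range (m+1), (σ ^ l) z :=
          (Finset.prod_range_succ' (fun l => (σ ^ l) z) m).symm
      _ = (∏ l ∈ Finset.range m, (σ ^ l) z) * z := by
          rw [Finset.prod_range_succ, hσm]; rfl

lemma Nm_ne_zero (σ : Fqm ≃ₐ[Fq] Fqm) (m : ℕ) {z : Fqm} (hz : z ≠ 0) :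
    (∏ l ∈ Finset.range m, (σ ^ l) z) ≠ 0 := by
  rw [Finset.prod_ne_zero_iff]
  intro l _ h
  exact hz ((σ ^ l).injective (by rw [h, map_zero]))

lemma Nm_rel (σ : Fqm ≃ₐ[Fq] Fqm) (m : ℕ) (hσm : σ ^ m = 1) {b c z : Fqm} (hz : z ≠ 0)
    (h : σ z * b = c * z) :
    (∏ l ∈ Finset.range m, (σ ^ l) b) = ∏ l ∈ Finset.range m, (σ ^ l) c := by
  have h1 : (∏ l ∈ Finset.range m, (σ ^ l) (σ z)) * (∏ l ∈ Finset.range m, (σ ^ l) b)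
      = (∏ l ∈ Finset.range m, (σ ^ l) c) * (∏ l ∈ Finset.range m, (σ ^ l) z) := by
    rw [← Finset.prod_mul_distrib, ← Finset.prod_mul_distrib]
    simp only [← map_mul]
    rw [h]
  rw [Nm_sigma Fq Fqm σ m hσm] at h1
  have hNz := Nm_ne_zero Fq Fqm σ m hz
  exact mul_left_cancel₀ hNz (h1.trans (mul_comm _ _))

lemma fixed_mem_range [Fintype Fq] [Fintype Fqm] (σ : Fqm ≃ₐ[Fq] Fqm)
    (hσ : ∀ τ : Fqm ≃ₐ[Fq] Fqm, τ ∈ Subgroup.zpowers σ) {u : Fqm} (hu : σ u = u) :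
    ∃ r : Fq, algebraMap Fq Fqm r = u := by
  have hfix : u ∈ IntermediateField.fixedField (⊤ : Subgroup (Fqm ≃ₐ[Fq] Fqm)) := by
    intro τ
    have h2 : Subgroup.zpowers σ ≤ MulAction.stabilizer (Fqm ≃ₐ[Fq] Fqm) u := by
      rw [Subgroup.zpowers_le]; exact hu
    exact h2 (hσ τ.1)
  have htop : IntermediateField.fixedField (⊤ : Subgroup (Fqm ≃ₐ[Fq] Fqm)) = ⊥ := by
    have := IsGalois.fixedField_fixingSubgroup (⊥ : IntermediateField Fq Fqm)
    rwa [IntermediateField.fixingSubgroup_bot] at this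
  rw [htop] at hfix
  rwa [IntermediateField.mem_bot, Set.mem_range] at hfix

lemma finrank_ker_DsubM_le_one [Fintype Fq] [Fintype Fqm] (σ : Fqm ≃ₐ[Fq] Fqm)
    (hσ : ∀ τ : Fqm ≃ₐ[Fq] Fqm, τ ∈ Subgroup.zpowers σ) {b : Fqm} (hb : b ≠ 0) (c : Fqm) :
    finrank Fq (LinearMap.ker (Dop Fq Fqm σ b - LinearMap.mulLeft Fq c)) ≤ 1 := by
  have : FiniteDimensional Fq Fqm := inferInstance
  by_cases h : LinearMap.ker (Dop Fq Fqm σ b - LinearMap.mulLeft Fq c) = ⊥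
  · rw [h, finrank_bot]; omega
  · obtain ⟨z, hzmem, hz0⟩ := (Submodule.ne_bot_iff _).mp h
    have hzrel : σ z * b = c * z := by
      have := hzmem
      rw [LinearMap.mem_ker, LinearMap.sub_apply, Dop_apply, LinearMap.mulLeft_apply,
        sub_eq_zero] at this
      exact this
    have hle : LinearMap.ker (Dop Fq Fqm σ b - LinearMap.mulLeft Fq c)
        ≤ Submodule.span Fq {z} := by
      intro w hw
      rw [LinearMap.mem_ker, LinearMap.sub_apply, Dop_apply, LinearMap.mulLeft_apply,
        sub_eq_zero] at hw
      -- hw : σ w * b = c * w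
      have hcross : σ w * z = σ z * w := by
        have h1 : (σ w * b) * z = (σ z * b) * w := by rw [hw, hzrel]; ring
        have := mul_right_cancel₀ hb (by linear_combination h1 : (σ w * z) * b = (σ z * w) * b)
        exact this
      have hfixq : σ (w / z) = w / z := by
        rw [map_div₀]
        rw [div_eq_div_iff ((map_ne_zero_iff _ σ.injective).mpr hz0) hz0]
        linear_combination hcross
      obtain ⟨r, hr⟩ := fixed_mem_range Fq Fqm σ hσ hfixq
      have hw' : w = r • z := by
        rw [Algebra.smul_def, hr, div_mul_cancel₀ _ hz0]
      rw [hw']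
      exact Submodule.smul_mem _ r (Submodule.mem_span_singleton_self z)
    calc finrank Fq (LinearMap.ker (Dop Fq Fqm σ b - LinearMap.mulLeft Fq c))
        ≤ finrank Fq (Submodule.span Fq {z}) := Submodule.finrank_mono hle
      _ = 1 := finrank_span_singleton hz0

end Aux2
open Finset LinearMap Module

section Key
variable (Fq Fqm : Type) [Field Fq] [Field Fqm] [Algebra Fq Fqm]

/-- The factorization identity: if `f j = g (j-1) - g j σ^j(c)` (suitably interpreted),
then `op f (d+1) b = op g d b ∘ (D_b - M_c)`. -/
lemma op_factor (σ : Fqm ≃ₐ[Fq] Fqm) (f g : ℕ → Fqm) (d : ℕ) (c : Fqm)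
    (hgz : g (d+1) = 0)
    (hgrec : ∀ j ≤ d, g j = f (j+1) + g (j+1) * (σ ^ (j+1)) c)
    (hg0 : f 0 + g 0 * c = 0) (b : Fqm) :
    op Fq Fqm σ f (d+1) b
      = (op Fq Fqm σ g d b) ∘ₗ (Dop Fq Fqm σ b - LinearMap.mulLeft Fq c) := by
  apply LinearMap.ext
  intro y
  rw [LinearMap.comp_apply, LinearMap.sub_apply, Dop_apply, LinearMap.mulLeft_apply,
    op_apply, op_apply]
  set h : ℕ → Fqm := fun j => (σ ^ j) y * ∏ l ∈ Finset.range j, (σ ^ l) b with hh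
  -- RHS term transformation
  have hterm : ∀ j, g j * ((σ ^ j) (σ y * b - c * y) * ∏ l ∈ Finset.range j, (σ ^ l) b)
      = g j * h (j+1) - g j * (σ ^ j) c * h j := by
    intro j
    have e1 : (σ ^ j) (σ y) = (σ ^ (j+1)) y := by rw [pow_succ]; rfl
    have e2 : h (j+1) = (σ ^ (j+1)) y * ((∏ l ∈ Finset.range j, (σ ^ l) b) * (σ ^ j) b) := by
      rw [hh]; simp only []; rw [Finset.prod_range_succ]
    rw [map_sub, map_mul, map_mul, e1, e2, hh]
    ring
  rw [Finset.sum_congr rfl (fun j _ => hterm j), Finset.sum_sub_distrib]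
  -- Now: ∑_{j<d+2} f j * h j = ∑_{j<d+1} g j * h (j+1) - ∑_{j<d+1} g j σ^j c * h j
  have key : (∑ j ∈ Finset.range (d+1+1), f j * h j)
      + ∑ j ∈ Finset.range (d+1), g j * (σ ^ j) c * h j
      = ∑ j ∈ Finset.range (d+1), g j * h (j+1) := by
    have ext2 : (∑ j ∈ Finset.range (d+1), g j * (σ ^ j) c * h j)
        = ∑ j ∈ Finset.range (d+1+1), g j * (σ ^ j) c * h j := by
      rw [Finset.sum_range_succ (fun j => g j * (σ ^ j) c * h j) (d+1), hgz]
      ring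
    rw [ext2, ← Finset.sum_add_distrib]
    have hG : ∀ j ∈ Finset.range (d+1+1),
        f j * h j + g j * (σ ^ j) c * h j = (f j + g j * (σ ^ j) c) * h j :=
      fun j _ => by ring
    rw [Finset.sum_congr rfl hG,
      Finset.sum_range_succ' (fun j => (f j + g j * (σ ^ j) c) * h j) (d+1)]
    have hzero : (f 0 + g 0 * (σ ^ 0) c) * h 0 = 0 := by
      rw [pow_zero, AlgEquiv.one_apply, hg0, zero_mul]
    rw [hzero, add_zero]
    apply Finset.sum_congr rfl
    intro j hj
    rw [Finset.mem_range] at hj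
    have := hgrec j (by omega)
    rw [show f (j+1) + g (j+1) * (σ ^ (j+1)) c = g j from this.symm]
  exact eq_sub_of_add_eq key
end Key
open Finset LinearMap Module

section KeyInd
variable (Fq Fqm : Type) [Field Fq] [Field Fqm] [Fintype Fq] [Fintype Fqm] [Algebra Fq Fqm]

lemma key_lemma (m : ℕ) (σ : Fqm ≃ₐ[Fq] Fqm) (hσm : σ ^ m = 1)
    (hσ : ∀ τ : Fqm ≃ₐ[Fq] Fqm, τ ∈ Subgroup.zpowers σ)
    {t : ℕ} (a : Fin t → Fqm) (ha0 : ∀ i, a i ≠ 0)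
    (hnorm : ∀ i j : Fin t,
      (∏ l ∈ Finset.range m, (σ ^ l) (a i)) = (∏ l ∈ Finset.range m, (σ ^ l) (a j)) → i = j) :
    ∀ (d : ℕ) (f : ℕ → Fqm), f d ≠ 0 →
      (∑ i, finrank Fq (LinearMap.ker (op Fq Fqm σ f d (a i)))) ≤ d := by
  intro d
  induction d with
  | zero =>
    intro f hf
    have hker : ∀ i, LinearMap.ker (op Fq Fqm σ f 0 (a i)) = ⊥ := by
      intro i
      rw [LinearMap.ker_eq_bot']
      intro y hy
      rw [op_apply] at hy
      simp only [zero_add, Finset.range_one, Finset.sum_singleton, pow_zero,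
        AlgEquiv.one_apply, Finset.range_zero, Finset.prod_empty, mul_one] at hy
      exact (mul_eq_zero.mp hy).resolve_left hf
    rw [Finset.sum_eq_zero (fun i _ => by rw [hker i, finrank_bot])]
  | succ d ih =>
    intro f hf
    by_cases hK : ∀ i, LinearMap.ker (op Fq Fqm σ f (d+1) (a i)) = ⊥
    · rw [Finset.sum_eq_zero (fun i _ => by rw [hK i, finrank_bot])]
      exact Nat.zero_le _
    · push_neg at hK
      obtain ⟨i, hi⟩ := hK
      obtain ⟨y, hymem, hy0⟩ := (Submodule.ne_bot_iff _).mp hi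
      have hyk : op Fq Fqm σ f (d+1) (a i) y = 0 := hymem
      set c : Fqm := σ y * a i * y⁻¹ with hc
      have hcy : c * y = σ y * a i := by
        rw [hc, mul_assoc, inv_mul_cancel₀ hy0, mul_one]
      -- telescoping: N_j(c) * y = σ^j(y) * N_j(a i)
      have hNc : ∀ j, (∏ l ∈ Finset.range j, (σ ^ l) c) * y
          = (σ ^ j) y * ∏ l ∈ Finset.range j, (σ ^ l) (a i) := by
        intro j
        induction j with
        | zero => simp
        | succ j hj =>
          rw [Finset.prod_range_succ, Finset.prod_range_succ]
          have e1 : (σ ^ j) (c * y) = (σ ^ j) c * (σ ^ j) y := map_mul _ _ _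
          have e2 : (σ ^ j) (σ y * a i) = (σ ^ (j+1)) y * (σ ^ j) (a i) := by
            rw [map_mul]; rfl
          have e3 : (σ ^ j) c * (σ ^ j) y = (σ ^ (j+1)) y * (σ ^ j) (a i) := by
            rw [← e1, hcy, e2]
          calc (∏ l ∈ Finset.range j, (σ ^ l) c) * (σ ^ j) c * y
              = ((∏ l ∈ Finset.range j, (σ ^ l) c) * y) * (σ ^ j) c := by ring
            _ = (σ ^ j) y * (∏ l ∈ Finset.range j, (σ ^ l) (a i)) * (σ ^ j) c := by rw [hj]
            _ = ((σ ^ j) c * (σ ^ j) y) * ∏ l ∈ Finset.range j, (σ ^ l) (a i) := by ring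
            _ = ((σ ^ (j+1)) y * (σ ^ j) (a i)) * ∏ l ∈ Finset.range j, (σ ^ l) (a i) := by
                rw [e3]
            _ = (σ ^ (j+1)) y * ((∏ l ∈ Finset.range j, (σ ^ l) (a i)) * (σ ^ j) (a i)) := by
                ring
      have hroot : ∑ j ∈ Finset.range (d+1+1), f j * ∏ l ∈ Finset.range j, (σ ^ l) c = 0 := by
        have h2 : (∑ j ∈ Finset.range (d+1+1), f j * ∏ l ∈ Finset.range j, (σ ^ l) c) * y
            = 0 := by
          rw [Finset.sum_mul]
          have : ∀ j ∈ Finset.range (d+1+1),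
              f j * (∏ l ∈ Finset.range j, (σ ^ l) c) * y
                = f j * ((σ ^ j) y * ∏ l ∈ Finset.range j, (σ ^ l) (a i)) := by
            intro j _
            rw [mul_assoc, hNc j]
          rw [Finset.sum_congr rfl this, ← op_apply, hyk]
        exact (mul_eq_zero.mp h2).resolve_right hy0
      -- quotient polynomial g
      set g : ℕ → Fqm := fun j =>
        ∑ i' ∈ Finset.Ico (j+1) (d+1+1), f i' * ∏ l ∈ Finset.Ico (j+1) i', (σ ^ l) c with hg
      have hgz : g (d+1) = 0 := by
        rw [hg]; simp
      have hgrec : ∀ j ≤ d, g j = f (j+1) + g (j+1) * (σ ^ (j+1)) c := by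
        intro j hj
        simp only [hg]
        rw [Finset.sum_eq_sum_Ico_succ_bot (by omega : j+1 < d+1+1)]
        simp only [Finset.Ico_self, Finset.prod_empty, mul_one]
        congr 1
        rw [Finset.sum_mul]
        apply Finset.sum_congr rfl
        intro i' hi'
        rw [Finset.mem_Ico] at hi'
        rw [Finset.prod_eq_prod_Ico_succ_bot (by omega : j+1 < i')]
        ring
      have hg0 : f 0 + g 0 * c = 0 := by
        simp only [hg]
        rw [Finset.sum_mul]
        have : ∀ i' ∈ Finset.Ico (0+1) (d+1+1),
            f i' * (∏ l ∈ Finset.Ico (0+1) i', (σ ^ l) c) * c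
              = f i' * ∏ l ∈ Finset.range i', (σ ^ l) c := by
          intro i' hi'
          rw [Finset.mem_Ico] at hi'
          rw [Finset.range_eq_Ico, Finset.prod_eq_prod_Ico_succ_bot (by omega : 0 < i')]
          simp only [pow_zero, AlgEquiv.one_apply]
          ring
        rw [Finset.sum_congr rfl this]
        have := hroot
        rw [Finset.range_eq_Ico, Finset.sum_eq_sum_Ico_succ_bot (by omega : 0 < d+1+1)] at this
        simpa using this
      have hgd : g d = f (d+1) := by
        rw [hgrec d le_rfl, hgz, zero_mul, add_zero]
      -- factorization and kernel bound
      have hbound : ∀ i' : Fin t,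
          finrank Fq (LinearMap.ker (op Fq Fqm σ f (d+1) (a i')))
            ≤ finrank Fq (LinearMap.ker (op Fq Fqm σ g d (a i')))
              + finrank Fq (LinearMap.ker (Dop Fq Fqm σ (a i') - LinearMap.mulLeft Fq c)) := by
        intro i'
        rw [op_factor Fq Fqm σ f g d c hgz hgrec hg0 (a i')]
        exact finrank_ker_comp_le _ _
      have hsum1 : (∑ i', finrank Fq
          (LinearMap.ker (Dop Fq Fqm σ (a i') - LinearMap.mulLeft Fq c))) ≤ 1 := by
        have hzero : ∀ i' : Fin t, i' ≠ i →
            LinearMap.ker (Dop Fq Fqm σ (a i') - LinearMap.mulLeft Fq c) = ⊥ := by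
          intro i' hne
          by_contra hne2
          obtain ⟨z, hzmem, hz0⟩ := (Submodule.ne_bot_iff _).mp hne2
          have hzrel : σ z * a i' = c * z := by
            have := hzmem
            rw [LinearMap.mem_ker, LinearMap.sub_apply, Dop_apply, LinearMap.mulLeft_apply,
              sub_eq_zero] at this
            exact this
          have h1 := Nm_rel Fq Fqm σ m hσm hz0 hzrel
          have h2 := Nm_rel Fq Fqm σ m hσm hy0 hcy.symm
          exact hne (hnorm i' i (h1.trans h2.symm))
        calc (∑ i', finrank Fq
              (LinearMap.ker (Dop Fq Fqm σ (a i') - LinearMap.mulLeft Fq c)))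
            = finrank Fq (LinearMap.ker (Dop Fq Fqm σ (a i) - LinearMap.mulLeft Fq c)) := by
              apply Finset.sum_eq_single i
              · intro i' _ hne
                rw [hzero i' hne, finrank_bot]
              · intro habs
                exact absurd (Finset.mem_univ i) habs
          _ ≤ 1 := finrank_ker_DsubM_le_one Fq Fqm σ hσ (ha0 i) c
      calc (∑ i', finrank Fq (LinearMap.ker (op Fq Fqm σ f (d+1) (a i'))))
          ≤ ∑ i', (finrank Fq (LinearMap.ker (op Fq Fqm σ g d (a i')))
              + finrank Fq (LinearMap.ker (Dop Fq Fqm σ (a i') - LinearMap.mulLeft Fq c))) :=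
            Finset.sum_le_sum (fun i' _ => hbound i')
        _ = (∑ i', finrank Fq (LinearMap.ker (op Fq Fqm σ g d (a i'))))
            + ∑ i', finrank Fq (LinearMap.ker (Dop Fq Fqm σ (a i') - LinearMap.mulLeft Fq c)) :=
            Finset.sum_add_distrib
        _ ≤ d + 1 := add_le_add (ih g (by rw [hgd]; exact hf)) hsum1
end KeyInd
open Finset LinearMap Module

section Strip
variable (Fq Fqm : Type) [Field Fq] [Field Fqm] [Fintype Fq] [Fintype Fqm] [Algebra Fq Fqm]

lemma strip_lemma (σ : Fqm ≃ₐ[Fq] Fqm) (f : ℕ → Fqm) (e d : ℕ) (hed : e ≤ d)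
    (hlow : ∀ j < e, f j = 0) {b : Fqm} (hb : b ≠ 0) :
    finrank Fq (LinearMap.ker (op Fq Fqm σ f d b))
      ≤ finrank Fq (LinearMap.ker (op Fq Fqm σ (fun j => f (j+e)) (d-e) b)) := by
  have hDker : LinearMap.ker ((Dop Fq Fqm σ b) ^ e) = ⊥ := by
    rw [LinearMap.ker_eq_bot']
    intro y hy
    rw [Dop_pow_apply] at hy
    rcases mul_eq_zero.mp hy with h | h
    · exact (σ ^ e).injective (by rw [h, map_zero])
    · exact absurd h (Nm_ne_zero Fq Fqm σ e hb)
  have hcomp : op Fq Fqm σ f d b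
      = (op Fq Fqm σ (fun j => f (j+e)) (d-e) b) ∘ₗ ((Dop Fq Fqm σ b) ^ e) := by
    apply LinearMap.ext
    intro y
    rw [LinearMap.comp_apply, op_apply, op_apply]
    have hterm : ∀ j, f (j+e) * ((σ ^ j) (((Dop Fq Fqm σ b) ^ e) y)
          * ∏ l ∈ Finset.range j, (σ ^ l) b)
        = f (j+e) * ((σ ^ (j+e)) y * ∏ l ∈ Finset.range (j+e), (σ ^ l) b) := by
      intro j
      rw [Dop_pow_apply, map_mul, Finset.prod_range_add (fun l => (σ ^ l) b) j e]
      have e1 : (σ ^ j) ((σ ^ e) y) = (σ ^ (j+e)) y := by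
        rw [pow_add]; rfl
      have e2 : (σ ^ j) (∏ l ∈ Finset.range e, (σ ^ l) b)
          = ∏ l ∈ Finset.range e, (σ ^ (j+l)) b := by
        rw [map_prod]
        exact Finset.prod_congr rfl (fun l _ => by rw [pow_add]; rfl)
      rw [e1, e2]
      ring
    rw [Finset.sum_congr rfl (fun j _ => hterm j)]
    -- LHS: ∑_{j < d+1} f j * (σ^j y * N_j b) ; restrict to j ≥ e and reindex
    have hsub : (∑ j ∈ Finset.Ico e (d+1),
          f j * ((σ ^ j) y * ∏ l ∈ Finset.range j, (σ ^ l) b))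
        = ∑ j ∈ Finset.range (d+1), f j * ((σ ^ j) y * ∏ l ∈ Finset.range j, (σ ^ l) b) := by
      apply Finset.sum_subset
      · intro x hx
        rw [Finset.mem_Ico] at hx
        rw [Finset.mem_range]
        omega
      · intro x hx hx2
        rw [Finset.mem_range] at hx
        rw [Finset.mem_Ico] at hx2
        rw [hlow x (by omega), zero_mul]
    rw [← hsub, Finset.sum_Ico_eq_sum_range]
    have hde : d + 1 - e = d - e + 1 := by omega
    rw [hde]
    apply Finset.sum_congr rfl
    intro j _
    have : e + j = j + e := by omega
    rw [this]
  rw [hcomp]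
  calc finrank Fq (LinearMap.ker ((op Fq Fqm σ (fun j => f (j+e)) (d-e) b)
          ∘ₗ ((Dop Fq Fqm σ b) ^ e)))
      ≤ finrank Fq (LinearMap.ker (op Fq Fqm σ (fun j => f (j+e)) (d-e) b))
        + finrank Fq (LinearMap.ker ((Dop Fq Fqm σ b) ^ e)) := finrank_ker_comp_le _ _
    _ = finrank Fq (LinearMap.ker (op Fq Fqm σ (fun j => f (j+e)) (d-e) b)) := by
        rw [hDker, finrank_bot, add_zero]
end Strip

/-- doubly-extended linearized Reed–Solomon codes are MSRD:
with `U i` as for the linearized Reed–Solomon code, `U₀ = Fq·(γ,0,…,0)` and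
`U∞ = Fq·(0,…,0,δ)`, one has
`∑ i dim_{Fq}(U i ∩ H) + dim_{Fq}(U₀ ∩ H) + dim_{Fq}(U∞ ∩ H) ≤ k - 1`
for every hyperplane `H = v^⊥` of `Fqm^k`. -/

theorem doublyExtendedLRS_MSRD
    (Fq Fqm : Type) [Field Fq] [Field Fqm] [Fintype Fq] [Fintype Fqm] [Algebra Fq Fqm]
    (m : ℕ) (hm : Module.finrank Fq Fqm = m)
    (σ : Fqm ≃ₐ[Fq] Fqm) (hσ : ∀ τ : Fqm ≃ₐ[Fq] Fqm, τ ∈ Subgroup.zpowers σ)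
    (n t k : ℕ) (hnm : n ≤ m)
    (β : Fin n → Fqm) (hβ : LinearIndependent Fq β)
    (a : Fin t → Fqm) (ha0 : ∀ i, a i ≠ 0)
    (hnorm : ∀ i j : Fin t,
      (∏ l ∈ Finset.range m, (σ ^ l) (a i)) = (∏ l ∈ Finset.range m, (σ ^ l) (a j)) → i = j)
    (hk2 : 2 ≤ k) (hkN : k ≤ n * t)
    (γ δ : Fqm) (hγ : γ ≠ 0) (hδ : δ ≠ 0)
    (U₀ Uinf : Submodule Fq (Fin k → Fqm))
    (hU₀ : U₀ = Submodule.span Fq {fun j : Fin k => if (j : ℕ) = 0 then γ else 0})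
    (hUinf : Uinf = Submodule.span Fq {fun j : Fin k => if (j : ℕ) = k - 1 then δ else 0})
    (v : Fin k → Fqm) (hv : v ≠ 0) :
    (∑ i, Module.finrank Fq
        ↥((Submodule.span Fq (Set.range β)).map (lrsMap Fq Fqm σ k (a i)) ⊓ perpQ Fq Fqm v))
      + Module.finrank Fq ↥(U₀ ⊓ perpQ Fq Fqm v)
      + Module.finrank Fq ↥(Uinf ⊓ perpQ Fq Fqm v)
      ≤ k - 1 := by
  classical
  have hσm : σ ^ m = 1 := by
    rw [← hm, ← IsGalois.card_aut_eq_finrank Fq Fqm]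
    exact pow_card_eq_one'
  set f : ℕ → Fqm := fun j => if h : j < k then v ⟨j, h⟩ else 0 with hf
  have hfv : ∀ j : Fin k, f (j : ℕ) = v j := by
    intro j
    simp only [hf, j.isLt, dif_pos, Fin.eta]
  set s : Finset ℕ := (Finset.range k).filter (fun j => f j ≠ 0) with hs
  have hsne : s.Nonempty := by
    obtain ⟨j0, hj0⟩ : ∃ j0 : Fin k, v j0 ≠ 0 := by
      by_contra hall
      push_neg at hall
      exact hv (funext fun j => hall j)
    exact ⟨(j0 : ℕ), Finset.mem_filter.mpr ⟨Finset.mem_range.mpr j0.isLt,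
      by rw [hfv j0]; exact hj0⟩⟩
  set d : ℕ := s.max' hsne with hd
  set e : ℕ := s.min' hsne with he
  have hds : d ∈ s := s.max'_mem hsne
  have hes : e ∈ s := s.min'_mem hsne
  have hdk : d < k := Finset.mem_range.mp (Finset.mem_filter.mp hds).1
  have hfd : f d ≠ 0 := (Finset.mem_filter.mp hds).2
  have hfe : f e ≠ 0 := (Finset.mem_filter.mp hes).2
  have hed : e ≤ d := s.min'_le _ hds
  have hmem_of : ∀ j, f j ≠ 0 → j ∈ s := by
    intro j hj
    have hjk : j < k := by
      by_contra hjk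
      exact hj (dif_neg hjk)
    exact Finset.mem_filter.mpr ⟨Finset.mem_range.mpr hjk, hj⟩
  have hlow : ∀ j < e, f j = 0 := by
    intro j hj
    by_contra hj2
    exact absurd (s.min'_le _ (hmem_of j hj2)) (by omega)
  -- membership in perpQ
  have hperp : ∀ w : Fin k → Fqm, w ∈ perpQ Fq Fqm v ↔ (∑ j, v j * w j) = 0 := by
    intro w
    rfl
  -- Part A : the LRS blocks
  have hA : ∀ i : Fin t,
      Module.finrank Fq
        ↥((Submodule.span Fq (Set.range β)).map (lrsMap Fq Fqm σ k (a i)) ⊓ perpQ Fq Fqm v)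
      ≤ finrank Fq (LinearMap.ker (op Fq Fqm σ f d (a i))) := by
    intro i
    have hopeq : op Fq Fqm σ f (k-1) (a i) = op Fq Fqm σ f d (a i) := by
      unfold op
      refine (Finset.sum_subset ?_ ?_).symm
      · intro x hx
        rw [Finset.mem_range] at hx ⊢
        omega
      · intro x hx hx2
        rw [Finset.mem_range] at hx hx2
        have hfx : f x = 0 := by
          by_contra hfx
          have := s.le_max' _ (hmem_of x hfx)
          omega
        rw [hfx, LinearMap.mulLeft_zero_eq_zero, LinearMap.zero_comp]
    have hincl : (Submodule.span Fq (Set.range β)).map (lrsMap Fq Fqm σ k (a i))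
          ⊓ perpQ Fq Fqm v
        ≤ (LinearMap.ker (op Fq Fqm σ f (k-1) (a i))).map (lrsMap Fq Fqm σ k (a i)) := by
      rintro w ⟨hw1, hw2⟩
      obtain ⟨y, hy, rfl⟩ := Submodule.mem_map.mp hw1
      refine Submodule.mem_map.mpr ⟨y, ?_, rfl⟩
      rw [LinearMap.mem_ker, op_apply]
      have hw2' : (∑ j : Fin k, v j * (lrsMap Fq Fqm σ k (a i) y j)) = 0 :=
        (hperp _).mp hw2
      have hterm : ∀ j : Fin k, v j * (lrsMap Fq Fqm σ k (a i) y j)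
          = f (j : ℕ) * ((σ ^ (j : ℕ)) y * ∏ l ∈ Finset.range (j : ℕ), (σ ^ l) (a i)) := by
        intro j
        rw [hfv j]
        rfl
      rw [Finset.sum_congr rfl (fun j _ => hterm j)] at hw2'
      rw [Fin.sum_univ_eq_sum_range
        (fun j => f j * ((σ ^ j) y * ∏ l ∈ Finset.range j, (σ ^ l) (a i))) k] at hw2'
      have hk1 : k - 1 + 1 = k := by omega
      rw [hk1]
      exact hw2'
    calc Module.finrank Fq
          ↥((Submodule.span Fq (Set.range β)).map (lrsMap Fq Fqm σ k (a i)) ⊓ perpQ Fq Fqm v)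
        ≤ finrank Fq ↥((LinearMap.ker (op Fq Fqm σ f (k-1) (a i))).map
            (lrsMap Fq Fqm σ k (a i))) := Submodule.finrank_mono hincl
      _ ≤ finrank Fq (LinearMap.ker (op Fq Fqm σ f (k-1) (a i))) :=
          Submodule.finrank_map_le _ _
      _ = finrank Fq (LinearMap.ker (op Fq Fqm σ f d (a i))) := by rw [hopeq]
  have hAA : (∑ i, Module.finrank Fq
        ↥((Submodule.span Fq (Set.range β)).map (lrsMap Fq Fqm σ k (a i)) ⊓ perpQ Fq Fqm v))
      ≤ d - e := by
    calc (∑ i, Module.finrank Fq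
          ↥((Submodule.span Fq (Set.range β)).map (lrsMap Fq Fqm σ k (a i)) ⊓ perpQ Fq Fqm v))
        ≤ ∑ i, finrank Fq (LinearMap.ker (op Fq Fqm σ f d (a i))) :=
          Finset.sum_le_sum (fun i _ => hA i)
      _ ≤ ∑ i, finrank Fq (LinearMap.ker (op Fq Fqm σ (fun j => f (j+e)) (d-e) (a i))) :=
          Finset.sum_le_sum (fun i _ => strip_lemma Fq Fqm σ f e d hed hlow (ha0 i))
      _ ≤ d - e := by
          apply key_lemma Fq Fqm m σ hσm hσ a ha0 hnorm (d-e) (fun j => f (j+e))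
          have : d - e + e = d := by omega
          rw [this]
          exact hfd
  -- Part B : U₀
  have hU0le : Module.finrank Fq ↥(U₀ ⊓ perpQ Fq Fqm v) ≤ 1 := by
    have hw0 : (fun j : Fin k => if (j : ℕ) = 0 then γ else 0) ≠ 0 := by
      intro hcon
      have hlt : 0 < k := by omega
      exact hγ (show γ = 0 from
        (if_pos rfl).symm.trans (congrFun hcon (⟨0, hlt⟩ : Fin k)))
    calc Module.finrank Fq ↥(U₀ ⊓ perpQ Fq Fqm v)
        ≤ Module.finrank Fq ↥U₀ := Submodule.finrank_mono inf_le_left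
      _ = 1 := by rw [hU₀]; exact finrank_span_singleton hw0
  have hU0zero : f 0 ≠ 0 → Module.finrank Fq ↥(U₀ ⊓ perpQ Fq Fqm v) = 0 := by
    intro h0
    have heq : U₀ ⊓ perpQ Fq Fqm v = ⊥ := by
      rw [Submodule.eq_bot_iff]
      intro x hx
      obtain ⟨hx1, hx2⟩ := Submodule.mem_inf.mp hx
      rw [hU₀, Submodule.mem_span_singleton] at hx1
      obtain ⟨r, rfl⟩ := hx1
      have hx2' : (∑ j : Fin k, v j *
          (r • fun j : Fin k => if (j : ℕ) = 0 then γ else 0) j) = 0 := (hperp _).mp hx2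
      have hlt0 : 0 < k := by omega
      have hsum : (∑ j : Fin k, v j *
          (r • fun j : Fin k => if (j : ℕ) = 0 then γ else 0) j)
          = v ⟨0, hlt0⟩ * ((r • fun j : Fin k => if (j : ℕ) = 0 then γ else 0) ⟨0, hlt0⟩) := by
        apply Finset.sum_eq_single (⟨0, hlt0⟩ : Fin k)
        · intro j _ hne
          have hne2 : (j : ℕ) ≠ 0 := fun hcon => hne (Fin.ext hcon)
          simp [hne2]
        · intro habs
          exact absurd (Finset.mem_univ _) habs
      have heval : ((r • fun j : Fin k => if (j : ℕ) = 0 then γ else 0) ⟨0, hlt0⟩)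
          = r • γ := by
        simp only [Pi.smul_apply]
        exact congrArg (fun x => r • x) (if_pos trivial)
      rw [hsum, heval] at hx2'
      have hvj0 : v ⟨0, hlt0⟩ ≠ 0 := by
        have heq0 : f (0 : ℕ) = v ⟨0, hlt0⟩ := by
          simp only [hf]
          rw [dif_pos hlt0]
        rw [heq0] at h0
        exact h0
      rw [Algebra.smul_def] at hx2'
      have hr : algebraMap Fq Fqm r = 0 := by
        rcases mul_eq_zero.mp hx2' with h | h
        · exact absurd h hvj0
        · rcases mul_eq_zero.mp h with h' | h'
          · exact h'
          · exact absurd h' hγ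
      have : r = 0 := by
        have := (map_eq_zero (algebraMap Fq Fqm)).mp hr
        exact this
      rw [this, zero_smul]
    rw [heq, finrank_bot]
  -- Part C : U∞
  have hUinfle : Module.finrank Fq ↥(Uinf ⊓ perpQ Fq Fqm v) ≤ 1 := by
    have hw1 : (fun j : Fin k => if (j : ℕ) = k - 1 then δ else 0) ≠ 0 := by
      intro hcon
      have hlt : k - 1 < k := by omega
      exact hδ (show δ = 0 from
        (if_pos rfl).symm.trans (congrFun hcon (⟨k-1, hlt⟩ : Fin k)))
    calc Module.finrank Fq ↥(Uinf ⊓ perpQ Fq Fqm v)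
        ≤ Module.finrank Fq ↥Uinf := Submodule.finrank_mono inf_le_left
      _ = 1 := by rw [hUinf]; exact finrank_span_singleton hw1
  have hUinfzero : f (k-1) ≠ 0 → Module.finrank Fq ↥(Uinf ⊓ perpQ Fq Fqm v) = 0 := by
    intro h1
    have heq : Uinf ⊓ perpQ Fq Fqm v = ⊥ := by
      rw [Submodule.eq_bot_iff]
      intro x hx
      obtain ⟨hx1, hx2⟩ := Submodule.mem_inf.mp hx
      rw [hUinf, Submodule.mem_span_singleton] at hx1
      obtain ⟨r, rfl⟩ := hx1
      have hx2' : (∑ j : Fin k, v j *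
          (r • fun j : Fin k => if (j : ℕ) = k - 1 then δ else 0) j) = 0 := (hperp _).mp hx2
      have hlt1 : k - 1 < k := by omega
      have hsum : (∑ j : Fin k, v j *
          (r • fun j : Fin k => if (j : ℕ) = k - 1 then δ else 0) j)
          = v ⟨k-1, hlt1⟩
            * ((r • fun j : Fin k => if (j : ℕ) = k - 1 then δ else 0) ⟨k-1, hlt1⟩) := by
        apply Finset.sum_eq_single (⟨k-1, hlt1⟩ : Fin k)
        · intro j _ hne
          have hne2 : (j : ℕ) ≠ k - 1 := fun hcon => hne (Fin.ext hcon)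
          simp [hne2]
        · intro habs
          exact absurd (Finset.mem_univ _) habs
      have heval : ((r • fun j : Fin k => if (j : ℕ) = k - 1 then δ else 0) ⟨k-1, hlt1⟩)
          = r • δ := by
        simp only [Pi.smul_apply]
        exact congrArg (fun x => r • x) (if_pos trivial)
      rw [hsum, heval] at hx2'
      have hvj1 : v ⟨k-1, hlt1⟩ ≠ 0 := by
        have heq1 : f (k-1 : ℕ) = v ⟨k-1, hlt1⟩ := by
          simp only [hf]
          rw [dif_pos hlt1]
        rw [heq1] at h1
        exact h1
      rw [Algebra.smul_def] at hx2'
      have hr : algebraMap Fq Fqm r = 0 := by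
        rcases mul_eq_zero.mp hx2' with h | h
        · exact absurd h hvj1
        · rcases mul_eq_zero.mp h with h' | h'
          · exact h'
          · exact absurd h' hδ
      have : r = 0 := (map_eq_zero (algebraMap Fq Fqm)).mp hr
      rw [this, zero_smul]
    rw [heq, finrank_bot]
  -- final case analysis
  by_cases h0 : f 0 = 0 <;> by_cases h1 : f (k-1) = 0
  · -- both vanish: 1 ≤ e, d ≤ k-2
    have he1 : 1 ≤ e := by
      rcases Nat.eq_zero_or_pos e with h | h
      · rw [h] at hfe; exact absurd h0 hfe
      · exact h
    have hd2 : d ≤ k - 2 := by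
      have : d ≠ k - 1 := fun hcon => hfd (hcon ▸ h1)
      omega
    have := hU0le
    have := hUinfle
    omega
  · have he1 : 1 ≤ e := by
      rcases Nat.eq_zero_or_pos e with h | h
      · rw [h] at hfe; exact absurd h0 hfe
      · exact h
    have h2 := hUinfzero h1
    have := hU0le
    omega
  · have h2 := hU0zero h0
    have hd2 : d ≤ k - 2 := by
      have : d ≠ k - 1 := fun hcon => hfd (hcon ▸ h1)
      omega
    have := hUinfle
    omega
  · have h2 := hU0zero h0
    have h3 := hUinfzero h1
    omega
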